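/- Let R be a local commutative Noetherian ring, and let A ⊆ R[x_1,…,x_r] be a t_1-tilted R-subalgebra (not necessarily finitely generated or monomial): there exists ε > 0 such that every monomial x^m with m = (m_1,…,m_r) ∈ ℕ^r, m ≠ 0, and m_2 + ⋯ + m_r ≤ ε·(m_1 + ⋯ + m_r) belongs to A. Let g = (g_1,…,g_n) be a unimodular n-row over A with n ≥ 2, such that the row g|_{x_1=0}, obtained by substituting 0 for x_1, has all entries in R and is a unimodular row over R. Then there exists a unimodular n-row h = (h_1,…,h_n) over A such that g and h lie in the same E_n(A)-orbit and, for each i = 1,…,n, the ideal generated by h_1,…,h_i in R[x_1,…,x_r] is either the unit ideal or has height at least i in R[x_1,…,x_r]. -/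

import Mathlib

/-- A matrix is *elementary* if it differs from the identity matrix in
at most one nonzero off-diagonal entry. -/
def IsElemMat {A : Type*} [CommRing A] {n : ℕ} (E : Matrix (Fin n) (Fin n) A) : Prop :=
  ∃ (i j : Fin n) (c : A), i ≠ j ∧ E = Matrix.transvection i j c

/-- Membership in the elementary group `E_n(A)`: a product of elementary matrices. -/
def IsElementary {A : Type*} [CommRing A] {n : ℕ} (E : Matrix (Fin n) (Fin n) A) : Prop :=
  E ∈ Submonoid.closure { E : Matrix (Fin n) (Fin n) A | IsElemMat E }

/-- A row is unimodular if its entries generate the unit ideal. -/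
def IsUnimodular {A : Type*} [CommRing A] {n : ℕ} (v : Fin n → A) : Prop :=
  Ideal.span (Set.range v) = ⊤

/-- The standard unimodular row `e = (1,0,…,0)`. -/
def stdRow (A : Type*) [CommRing A] (n : ℕ) : Fin n → A := fun i => if i.1 = 0 then 1 else 0

/-- `f` and `g` lie in the same orbit of the right action of `E_n(A)`. -/
def ElemEquiv {A : Type*} [CommRing A] {n : ℕ} (f g : Fin n → A) : Prop :=
  ∃ E : Matrix (Fin n) (Fin n) A, IsElementary E ∧ Matrix.vecMul f E = g

/-- The height of an ideal: the infimum of the heights of the prime ideals containing it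
(equivalently, of the primes minimal over it); the height of the unit ideal is `⊤`. -/
noncomputable def idealHeight {A : Type*} [CommRing A] (I : Ideal A) : ℕ∞ :=
  ⨅ p ∈ { p : PrimeSpectrum A | I ≤ p.asIdeal }, Order.height p

/-- A `t₁`-tilted `R`-subalgebra of `R[x₁,…,x_r]`: all nonzero monomials whose exponent
vectors lie in a suitable neighborhood of the exponent direction of `x₁` belong to `A`. -/
def IsTilted {R : Type*} [CommRing R] {r : ℕ}
    (A : Subalgebra R (MvPolynomial (Fin r) R)) : Prop :=
  ∃ ε : ℝ, 0 < ε ∧ ∀ m : Fin r →₀ ℕ, m ≠ 0 →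
    (∑ j ∈ Finset.univ.filter (fun j : Fin r => (j : ℕ) ≠ 0), (m j : ℝ))
        ≤ ε * ∑ j, (m j : ℝ) →
    MvPolynomial.monomial m (1 : R) ∈ A

open MvPolynomial

section Generic
variable {A : Type*} [CommRing A] {n : ℕ}

theorem elemEquiv_refl (v : Fin n → A) : ElemEquiv v v :=
  ⟨1, Submonoid.one_mem _, Matrix.vecMul_one v⟩

theorem elemEquiv_trans {u v w : Fin n → A} (h1 : ElemEquiv u v) (h2 : ElemEquiv v w) :
    ElemEquiv u w := by
  obtain ⟨E1, hE1, rfl⟩ := h1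
  obtain ⟨E2, hE2, rfl⟩ := h2
  exact ⟨E1 * E2, Submonoid.mul_mem _ hE1 hE2, (Matrix.vecMul_vecMul _ _ _).symm⟩

theorem vecMul_transvection (v : Fin n → A) {k l : Fin n} (hkl : k ≠ l) (c : A) :
    Matrix.vecMul v (Matrix.transvection k l c) = Function.update v l (v l + v k * c) := by
  ext j
  rw [Matrix.transvection, Matrix.vecMul_add, Matrix.vecMul_one]
  rcases eq_or_ne j l with rfl | hj
  · simp [Matrix.vecMul, dotProduct, Matrix.single_apply_same,
      Matrix.single, Finset.sum_ite_eq]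
  · simp [hj, Function.update_of_ne hj, Matrix.vecMul, dotProduct,
      Matrix.single, Ne.symm hj, Finset.sum_ite_eq]

theorem elemEquiv_step (v : Fin n → A) {k l : Fin n} (hkl : k ≠ l) (c : A) :
    ElemEquiv v (Function.update v l (v l + v k * c)) :=
  ⟨Matrix.transvection k l c,
    Submonoid.subset_closure ⟨k, l, c, hkl, rfl⟩, vecMul_transvection v hkl c⟩

theorem isUnimodular_step {v : Fin n → A} (hv : IsUnimodular v) {k l : Fin n} (hkl : k ≠ l)
    (c : A) : IsUnimodular (Function.update v l (v l + v k * c)) := by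
  rw [IsUnimodular, eq_top_iff, ← hv, Ideal.span_le]
  rintro _ ⟨j, rfl⟩
  rcases eq_or_ne j l with hjl | hj
  · have key : v l = Function.update v l (v l + v k * c) l
        - Function.update v l (v l + v k * c) k * c := by
      rw [Function.update_of_ne hkl, Function.update_self]; ring
    have mem : Function.update v l (v l + v k * c) l
        - Function.update v l (v l + v k * c) k * c
        ∈ Ideal.span (Set.range (Function.update v l (v l + v k * c))) :=
      sub_mem (Ideal.subset_span ⟨l, rfl⟩)
        (Ideal.mul_mem_right _ _ (Ideal.subset_span ⟨k, rfl⟩))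
    rw [← key] at mem
    rw [hjl]
    exact mem
  · have : v j = Function.update v l (v l + v k * c) j := (Function.update_of_ne hj _ _).symm
    rw [this]; exact Ideal.subset_span ⟨j, rfl⟩

end Generic

theorem minPrimes_finite {B : Type*} [CommRing B] [IsNoetherianRing B] (I : Ideal B) :
    I.minimalPrimes.Finite := by
  rw [Ideal.minimalPrimes_eq_comap]
  exact (minimalPrimes.finite_of_isNoetherianRing (B ⧸ I)).image _

theorem height_succ_le {B : Type*} [CommRing B] {p q : PrimeSpectrum B} (h : q < p) :
    Order.height q + 1 ≤ Order.height p := by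
  rw [Order.height_eq_iSup_lt_height p]
  exact le_iSup₂_of_le q h le_rfl

theorem span_coe_top {R B : Type*} [CommRing R] [CommRing B] [Algebra R B]
    {A : Subalgebra R B} {n : ℕ} {v : Fin n → A}
    (h : Ideal.span (Set.range v) = ⊤) :
    Ideal.span (Set.range fun j => (v j : B)) = ⊤ := by
  have himg : Set.range (fun j => (v j : B)) = ⇑A.val.toRingHom '' Set.range v := by
    rw [← Set.range_comp]; rfl
  rw [himg, ← Ideal.map_span A.val.toRingHom, h, Ideal.eq_top_iff_one]
  have : (1 : B) = A.val.toRingHom 1 := by simp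
  rw [this]
  exact Ideal.mem_map_of_mem A.val.toRingHom Submodule.mem_top

theorem exists_isUnit_of_span_top {R : Type*} [CommRing R] [IsLocalRing R] {n : ℕ}
    {g₀ : Fin n → R} (h : Ideal.span (Set.range g₀) = ⊤) : ∃ k, IsUnit (g₀ k) := by
  by_contra hx
  push_neg at hx
  have hsub : Set.range g₀ ⊆ ↑(IsLocalRing.maximalIdeal R) := by
    rintro _ ⟨k, rfl⟩
    exact (IsLocalRing.mem_maximalIdeal _).2 (hx k)
  have := Ideal.span_le.2 hsub
  rw [h] at this
  exact (IsLocalRing.maximalIdeal.isMaximal R).ne_top (top_le_iff.1 this)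

noncomputable def piSub {R : Type*} [CommRing R] {r : ℕ} :
    MvPolynomial (Fin r) R →ₐ[R] MvPolynomial (Fin r) R :=
  MvPolynomial.aeval (fun j : Fin r => if (j : ℕ) = 0 then 0 else MvPolynomial.X j)

theorem piSub_C {R : Type*} [CommRing R] {r : ℕ} (a : R) :
    piSub (C a : MvPolynomial (Fin r) R) = C a := by simp [piSub]

theorem sub_piSub_mem {R : Type*} [CommRing R] {r : ℕ} (hr : 0 < r)
    (f : MvPolynomial (Fin r) R) :
    f - piSub f ∈ Ideal.span {(X (⟨0, hr⟩ : Fin r) : MvPolynomial (Fin r) R)} := by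
  induction f using MvPolynomial.induction_on with
  | C a => rw [piSub_C]; simp
  | add p q hp hq =>
      have : p + q - piSub (p + q) = (p - piSub p) + (q - piSub q) := by
        rw [map_add]; ring
      rw [this]; exact add_mem hp hq
  | mul_X p j hp =>
      rcases eq_or_ne (j : ℕ) 0 with hj | hj
      · have hji : j = (⟨0, hr⟩ : Fin r) := by apply Fin.ext; exact hj
        have : piSub (p * X j) = 0 := by
          rw [map_mul, piSub, aeval_X]; simp [hj]
        rw [this, sub_zero, hji]
        exact Ideal.mul_mem_left _ _ (Ideal.subset_span rfl)
      · have : piSub (p * X j) = piSub p * X j := by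
          rw [map_mul, piSub, aeval_X]; simp [hj]
        have h2 : p * X j - piSub (p * X j) = (p - piSub p) * X j := by rw [this]; ring
        rw [h2]
        exact Ideal.mul_mem_right _ _ hp

section Avoid
variable {R : Type*} [CommRing R] {r n : ℕ}

theorem avoid (hr : 0 < r) {A : Subalgebra R (MvPolynomial (Fin r) R)}
    (hA' : ∀ f : MvPolynomial (Fin r) R, ∃ c : ℕ, 0 < c ∧ X (⟨0, hr⟩ : Fin r) ^ c * f ∈ A)
    (I : Ideal (MvPolynomial (Fin r) R))
    (S : Finset (Ideal (MvPolynomial (Fin r) R)))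
    (hS : ∀ q ∈ S, q ∈ I.minimalPrimes)
    (v : Fin n → A) (i : Fin n) (hum : IsUnimodular v)
    (hres : ∃ s : R, IsUnit s ∧ piSub ((v i : MvPolynomial (Fin r) R)) = C s) :
    ∃ w : Fin n → A, ElemEquiv v w ∧ IsUnimodular w ∧ (∀ j, j ≠ i → w j = v j) ∧
      ((w i : MvPolynomial (Fin r) R) - (v i : MvPolynomial (Fin r) R))
        ∈ Ideal.span {(X (⟨0, hr⟩ : Fin r) : MvPolynomial (Fin r) R)} ∧
      ∀ q ∈ S, (w i : MvPolynomial (Fin r) R) ∉ q := by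
  classical
  induction S using Finset.induction_on with
  | empty =>
      exact ⟨v, elemEquiv_refl v, hum, fun _ _ => rfl, by simp, by simp⟩
  | @insert q S hq IH =>
      obtain ⟨w, hEq, humw, hfix, hdiff, havoid⟩ :=
        IH (fun q' hq' => hS q' (Finset.mem_insert_of_mem hq'))
      by_cases hwq : (w i : MvPolynomial (Fin r) R) ∈ q
      · -- need to correct
        have hqmin := hS q (Finset.mem_insert_self q S)
        have hqprime : q.IsPrime := hqmin.1.1
        -- x₀ ∉ q
        have hx0q : (X (⟨0, hr⟩ : Fin r) : MvPolynomial (Fin r) R) ∉ q := by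
          intro hx0
          have hspan : Ideal.span {(X (⟨0, hr⟩ : Fin r) : MvPolynomial (Fin r) R)} ≤ q := by
            rw [Ideal.span_le]; simpa using hx0
          have hvi : (v i : MvPolynomial (Fin r) R) ∈ q := by
            have := hspan hdiff
            have : (v i : MvPolynomial (Fin r) R)
                = (w i : MvPolynomial (Fin r) R)
                  - ((w i : MvPolynomial (Fin r) R) - (v i : MvPolynomial (Fin r) R)) := by ring
            rw [this]
            exact Ideal.sub_mem _ hwq (hspan hdiff)
          obtain ⟨s, hsu, hres⟩ := hres
          have hCs : (C s : MvPolynomial (Fin r) R) ∈ q := by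
            have hmem := sub_piSub_mem hr ((v i : MvPolynomial (Fin r) R))
            rw [hres] at hmem
            have : (C s : MvPolynomial (Fin r) R)
                = (v i : MvPolynomial (Fin r) R)
                  - ((v i : MvPolynomial (Fin r) R) - C s) := by ring
            rw [this]
            exact Ideal.sub_mem _ hvi (hspan hmem)
          exact hqprime.ne_top (Ideal.eq_top_of_isUnit_mem _ hCs (hsu.map C))
        -- find escape index j ≠ i with v j ∉ q
        have hescape : ∃ j : Fin n, j ≠ i ∧ (v j : MvPolynomial (Fin r) R) ∉ q := by
          by_contra hall
          push_neg at hall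
          have hallw : ∀ j : Fin n, (w j : MvPolynomial (Fin r) R) ∈ q := by
            intro j
            rcases eq_or_ne j i with rfl | hj
            · exact hwq
            · rw [hfix j hj]; exact hall j hj
          have : Ideal.span (Set.range fun j => (w j : MvPolynomial (Fin r) R)) ≤ q := by
            rw [Ideal.span_le]; rintro _ ⟨j, rfl⟩; exact hallw j
          rw [span_coe_top humw] at this
          exact hqprime.ne_top (top_le_iff.1 this)
        obtain ⟨j, hji, hvjq⟩ := hescape
        -- pick β in every q' ∈ S but not in q
        have hpick : ∀ q' ∈ S, ∃ b, b ∈ q' ∧ b ∉ q := by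
          intro q' hq'
          have hne : q' ≠ q := fun h => hq (h ▸ hq')
          have hnle : ¬ q' ≤ q := by
            intro hle
            have hq'min := hS q' (Finset.mem_insert_of_mem hq')
            exact hne (le_antisymm hle (hqmin.2 ⟨hq'min.1.1, hq'min.1.2⟩ hle))
          exact SetLike.not_le_iff_exists.1 hnle
        choose b hb1 hb2 using hpick
        set β : MvPolynomial (Fin r) R := ∏ q' ∈ S.attach, b q' q'.2 with hβ
        have hβmem : ∀ q' ∈ S, β ∈ q' := by
          intro q' hq'
          rw [hβ, ← Finset.prod_erase_mul _ _ (Finset.mem_attach S ⟨q', hq'⟩)]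
          exact Ideal.mul_mem_left _ _ (hb1 q' hq')
        have hβq : β ∉ q := by
          rw [hβ]
          intro hmem
          rw [Ideal.IsPrime.prod_mem_iff] at hmem
          obtain ⟨⟨q', hq'⟩, _, hbq⟩ := hmem
          exact hb2 q' hq' hbq
        obtain ⟨c, hc0, hcA⟩ := hA' β
        set lam : A := ⟨X (⟨0, hr⟩ : Fin r) ^ c * β, hcA⟩ with hlam
        have hval : ((Function.update w i (w i + w j * lam) i : A) : MvPolynomial (Fin r) R)
            = (w i : MvPolynomial (Fin r) R)
              + (v j : MvPolynomial (Fin r) R) * (X (⟨0, hr⟩ : Fin r) ^ c * β) := by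
          rw [Function.update_self, hfix j hji]
          push_cast [hlam]
          ring
        refine ⟨Function.update w i (w i + w j * lam), elemEquiv_trans hEq
          (elemEquiv_step w hji lam), isUnimodular_step humw hji lam, ?_, ?_, ?_⟩
        · intro j' hj'
          rw [Function.update_of_ne hj', hfix j' hj']
        · rw [hval]
          have : (w i : MvPolynomial (Fin r) R)
              + (v j : MvPolynomial (Fin r) R) * (X (⟨0, hr⟩ : Fin r) ^ c * β)
              - (v i : MvPolynomial (Fin r) R)
              = ((w i : MvPolynomial (Fin r) R) - (v i : MvPolynomial (Fin r) R))
              + (v j : MvPolynomial (Fin r) R) * (X (⟨0, hr⟩ : Fin r) ^ c * β) := by ring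
          rw [this]
          refine add_mem hdiff ?_
          apply Ideal.mul_mem_left
          have hXc : (X (⟨0, hr⟩ : Fin r) : MvPolynomial (Fin r) R) ^ c * β
              = X (⟨0, hr⟩ : Fin r) * (X (⟨0, hr⟩ : Fin r) ^ (c - 1) * β) := by
            obtain ⟨d, rfl⟩ : ∃ d, c = d + 1 := ⟨c - 1, by omega⟩
            rw [Nat.add_sub_cancel, pow_succ]
            ring
          rw [hXc]
          exact Ideal.mul_mem_right _ _ (Ideal.subset_span rfl)
        · intro q' hq'
          rcases Finset.mem_insert.1 hq' with rfl | hq'S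
          · rw [hval]
            intro hmem
            have hsub : (v j : MvPolynomial (Fin r) R)
                * (X (⟨0, hr⟩ : Fin r) ^ c * β) ∈ q' := by
              have h2 := Ideal.sub_mem _ hmem hwq
              simpa using h2
            rcases hqprime.mem_or_mem hsub with h3 | h3
            · exact hvjq h3
            · rcases hqprime.mem_or_mem h3 with h4 | h4
              · exact hx0q (hqprime.mem_of_pow_mem c h4)
              · exact hβq h4
          · rw [hval]
            intro hmem
            have h5 : (v j : MvPolynomial (Fin r) R)
                * (X (⟨0, hr⟩ : Fin r) ^ c * β) ∈ q' :=
              Ideal.mul_mem_left _ _ (Ideal.mul_mem_left _ _ (hβmem q' hq'S))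
            have h6 := Ideal.sub_mem _ hmem h5
            simp only [add_sub_cancel_right] at h6
            exact havoid q' hq'S h6
      · -- no correction needed
        refine ⟨w, hEq, humw, hfix, hdiff, ?_⟩
        intro q' hq'
        rcases Finset.mem_insert.1 hq' with rfl | hq'S
        · exact hwq
        · exact havoid q' hq'S
end Avoid

section Stage
variable {R : Type*} [CommRing R] [IsNoetherianRing R] {r n : ℕ}

theorem piSub_of_mem_span_X {hr : 0 < r} {f : MvPolynomial (Fin r) R}
    (hf : f ∈ Ideal.span {(X (⟨0, hr⟩ : Fin r) : MvPolynomial (Fin r) R)}) :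
    piSub f = 0 := by
  rw [Ideal.mem_span_singleton'] at hf
  obtain ⟨a, rfl⟩ := hf
  rw [map_mul, piSub, aeval_X]
  simp

theorem stage (hr : 0 < r) {A : Subalgebra R (MvPolynomial (Fin r) R)}
    (hA' : ∀ f : MvPolynomial (Fin r) R, ∃ c : ℕ, 0 < c ∧ X (⟨0, hr⟩ : Fin r) ^ c * f ∈ A)
    (g : Fin n → A) (hg : IsUnimodular g) (g₀ : Fin n → R)
    (hg₀ : ∀ i, piSub ((g i : MvPolynomial (Fin r) R)) = C (g₀ i))
    (k : Fin n) (hk : IsUnit (g₀ k)) :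
    ∀ i : ℕ, i ≤ n → ∃ v : Fin n → A,
      ElemEquiv g v ∧ IsUnimodular v ∧
      (∀ j : Fin n, i ≤ (j : ℕ) → v j = g j) ∧
      (piSub ((v k : MvPolynomial (Fin r) R)) = C (g₀ k)) ∧
      (∀ m : ℕ, m ≤ i →
        (Ideal.span ((fun j => (v j : MvPolynomial (Fin r) R)) '' { j : Fin n | (j : ℕ) < m }) = ⊤
          ∨ ∀ p : PrimeSpectrum (MvPolynomial (Fin r) R),
              Ideal.span ((fun j => (v j : MvPolynomial (Fin r) R)) ''
                { j : Fin n | (j : ℕ) < m }) ≤ p.asIdeal → (m : ℕ∞) ≤ Order.height p)) := by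
  intro i
  induction i with
  | zero =>
      intro _
      refine ⟨g, elemEquiv_refl g, hg, fun _ _ => rfl, hg₀ k, ?_⟩
      intro m hm
      interval_cases m
      exact Or.inr (fun p _ => by simp)
  | succ i IH =>
      intro hin
      obtain ⟨v, hEq, hum, htail, hresk, hheights⟩ := IH (by omega)
      obtain ⟨ifin, hifin⟩ : ∃ ifin : Fin n, (ifin : ℕ) = i := ⟨⟨i, by omega⟩, rfl⟩
      have hne_of_lt : ∀ j : Fin n, (j : ℕ) < i → j ≠ ifin := by
        intro j hj h; rw [h, hifin] at hj; omega
      have hne_of_ge : ∀ j : Fin n, i + 1 ≤ (j : ℕ) → j ≠ ifin := by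
        intro j hj h; rw [h, hifin] at hj; omega
      -- Step 1 : arrange unit residue at position ifin
      have step1 : ∃ v₁ : Fin n → A, ElemEquiv v v₁ ∧ IsUnimodular v₁ ∧
          (∀ j : Fin n, j ≠ ifin → v₁ j = v j) ∧
          (piSub ((v₁ k : MvPolynomial (Fin r) R)) = C (g₀ k)) ∧
          (∃ s : R, IsUnit s ∧ piSub ((v₁ ifin : MvPolynomial (Fin r) R)) = C s) := by
        rcases eq_or_ne ifin k with hik | hik
        · exact ⟨v, elemEquiv_refl v, hum, fun _ _ => rfl, hresk,
            ⟨g₀ k, hk, by rw [hik]; exact hresk⟩⟩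
        · set μ : R := (1 - g₀ ifin) * ((hk.unit⁻¹ : Rˣ) : R) with hμ
          refine ⟨Function.update v ifin (v ifin + v k * algebraMap R A μ),
            elemEquiv_step v (Ne.symm hik) _, isUnimodular_step hum (Ne.symm hik) _,
            fun j hj => Function.update_of_ne hj _ _, ?_, ⟨1, isUnit_one, ?_⟩⟩
          · rw [Function.update_of_ne (Ne.symm hik)]
            exact hresk
          have hcoe : ((Function.update v ifin (v ifin + v k * algebraMap R A μ) ifin : A) :
              MvPolynomial (Fin r) R)
              = (v ifin : MvPolynomial (Fin r) R)
                + (v k : MvPolynomial (Fin r) R) * C μ := by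
            rw [Function.update_self]
            push_cast
            congr 1
          rw [hcoe, map_add, map_mul, hresk]
          have hvi : (v ifin : MvPolynomial (Fin r) R) = (g ifin : MvPolynomial (Fin r) R) := by
            rw [htail ifin (le_of_eq hifin.symm)]
          rw [hvi, hg₀ ifin]
          have hCμ : piSub (C μ : MvPolynomial (Fin r) R) = C μ := piSub_C μ
          rw [hCμ, ← map_mul, ← map_add]
          congr 1
          rw [hμ]
          have hrearr : g₀ k * ((1 - g₀ ifin) * ((hk.unit⁻¹ : Rˣ) : R))
              = (1 - g₀ ifin) * (g₀ k * ((hk.unit⁻¹ : Rˣ) : R)) := by ring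
          rw [hrearr]
          have hinv : g₀ k * ((hk.unit⁻¹ : Rˣ) : R) = 1 := hk.mul_val_inv
          rw [hinv]
          ring
      obtain ⟨v₁, hEq1, hum1, hfix1, hresk1, hres1⟩ := step1
      -- Step 2 : avoidance
      set I : Ideal (MvPolynomial (Fin r) R) :=
        Ideal.span ((fun j => (v₁ j : MvPolynomial (Fin r) R)) '' { j : Fin n | (j : ℕ) < i })
        with hI
      have hIfin : I.minimalPrimes.Finite := minPrimes_finite I
      obtain ⟨w, hEqw, humw, hfixw, hdiffw, havoidw⟩ :=
        avoid hr hA' I hIfin.toFinset (fun q hq => hIfin.mem_toFinset.1 hq) v₁ ifin hum1 hres1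
      have hprev : ∀ j : Fin n, (j : ℕ) < i → w j = v j := by
        intro j hj
        rw [hfixw j (hne_of_lt j hj), hfix1 j (hne_of_lt j hj)]
      -- image equalities
      have himgv : ∀ m : ℕ, m ≤ i →
          ((fun j => (w j : MvPolynomial (Fin r) R)) '' { j : Fin n | (j : ℕ) < m })
            = ((fun j => (v j : MvPolynomial (Fin r) R)) '' { j : Fin n | (j : ℕ) < m }) := by
        intro m hm
        apply Set.image_congr
        intro j hj
        rw [hprev j (lt_of_lt_of_le hj hm)]
      have hIw : I = Ideal.span
          ((fun j => (w j : MvPolynomial (Fin r) R)) '' { j : Fin n | (j : ℕ) < i }) := by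
        rw [hI]
        congr 1
        apply (Set.image_congr _).symm
        intro j hj
        rw [hfixw j (hne_of_lt j hj)]
      have hIv : I = Ideal.span
          ((fun j => (v j : MvPolynomial (Fin r) R)) '' { j : Fin n | (j : ℕ) < i }) := by
        rw [hI]
        congr 1
        apply Set.image_congr
        intro j hj
        rw [hfix1 j (hne_of_lt j hj)]
      refine ⟨w, elemEquiv_trans hEq (elemEquiv_trans hEq1 hEqw), humw, ?_, ?_, ?_⟩
      · intro j hj
        rw [hfixw j (hne_of_ge j hj), hfix1 j (hne_of_ge j hj)]
        exact htail j (by omega)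
      · rcases eq_or_ne k ifin with hki | hki
        · have hd : piSub ((w k : MvPolynomial (Fin r) R)
              - (v₁ k : MvPolynomial (Fin r) R)) = 0 := by
            apply piSub_of_mem_span_X (hr := hr)
            rw [hki]
            exact hdiffw
          have hsame : piSub ((w k : MvPolynomial (Fin r) R))
              = piSub ((v₁ k : MvPolynomial (Fin r) R)) := by
            have h2 := map_sub piSub ((w k : MvPolynomial (Fin r) R))
              ((v₁ k : MvPolynomial (Fin r) R))
            rw [hd] at h2
            linear_combination -h2
          rw [hsame]
          exact hresk1
        · rw [hfixw k hki]
          exact hresk1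
      · intro m hm
        rcases (show m ≤ i ∨ m = i + 1 by omega) with hmle | hmeq
        · rw [show ((fun j => (w j : MvPolynomial (Fin r) R)) '' { j : Fin n | (j : ℕ) < m })
              = ((fun j => (v j : MvPolynomial (Fin r) R)) '' { j : Fin n | (j : ℕ) < m })
            from himgv m hmle]
          exact hheights m hmle
        · subst hmeq
          have hmono : I ≤ Ideal.span
              ((fun j => (w j : MvPolynomial (Fin r) R)) '' { j : Fin n | (j : ℕ) < i + 1 }) := by
            rw [hIw]
            apply Ideal.span_mono
            apply Set.image_mono
            intro j hj
            exact Nat.lt_succ_of_lt hj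
          by_cases hItop : I = ⊤
          · left
            rw [eq_top_iff]
            rw [hItop] at hmono
            exact hmono
          · right
            intro p hple
            have hIold := hheights i (le_refl i)
            rw [← hIv] at hIold
            rcases hIold with htop | hht
            · exact absurd htop hItop
            · have hIle : I ≤ p.asIdeal := le_trans hmono hple
              obtain ⟨q, hqmin, hqle⟩ := Ideal.exists_minimalPrimes_le hIle
              have hq_prime : q.IsPrime := hqmin.1.1
              have hq_height : (i : ℕ∞) ≤ Order.height (⟨q, hq_prime⟩ : PrimeSpectrum _) := by
                exact hht ⟨q, hq_prime⟩ hqmin.1.2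
              have hwi_in_p : (w ifin : MvPolynomial (Fin r) R) ∈ p.asIdeal := by
                apply hple
                apply Ideal.subset_span
                exact ⟨ifin, by simp [hifin], rfl⟩
              have hwi_not_q : (w ifin : MvPolynomial (Fin r) R) ∉ q :=
                havoidw q (hIfin.mem_toFinset.2 hqmin)
              have hlt : (⟨q, hq_prime⟩ : PrimeSpectrum _) < p := by
                apply lt_of_le_of_ne hqle
                intro hqp
                apply hwi_not_q
                have hq_eq : q = p.asIdeal := by rw [← hqp]
                rw [hq_eq]
                exact hwi_in_p
              calc ((i + 1 : ℕ) : ℕ∞) = (i : ℕ∞) + 1 := by push_cast; rfl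
                _ ≤ Order.height (⟨q, hq_prime⟩ : PrimeSpectrum _) + 1 :=
                    add_le_add_left hq_height 1
                _ ≤ Order.height p := height_succ_le hlt
end Stage

theorem tilt_mem {R : Type*} [CommRing R] {r : ℕ}
    {A : Subalgebra R (MvPolynomial (Fin r) R)} (hA : IsTilted A) (hr : 0 < r)
    (f : MvPolynomial (Fin r) R) :
    ∃ c : ℕ, 0 < c ∧ MvPolynomial.X (⟨0, hr⟩ : Fin r) ^ c * f ∈ A := by
  obtain ⟨ε, hε, hmem⟩ := hA
  set i0 : Fin r := ⟨0, hr⟩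
  set c : ℕ := ⌈(f.totalDegree : ℝ) / ε⌉₊ + 1 with hc
  refine ⟨c, Nat.succ_pos _, ?_⟩
  have hDc : (f.totalDegree : ℝ) ≤ ε * c := by
    have h1 : (f.totalDegree : ℝ) / ε ≤ (c : ℝ) := by
      calc (f.totalDegree : ℝ) / ε ≤ ⌈(f.totalDegree : ℝ) / ε⌉₊ := Nat.le_ceil _
      _ ≤ (c : ℝ) := by rw [hc]; push_cast; linarith
    calc (f.totalDegree : ℝ) = ε * ((f.totalDegree : ℝ) / ε) := by field_simp
    _ ≤ ε * c := by exact mul_le_mul_of_nonneg_left h1 hε.le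
  rw [← support_sum_monomial_coeff f, Finset.mul_sum]
  apply Subalgebra.sum_mem
  intro m hm
  have key : (X i0 : MvPolynomial (Fin r) R) ^ c * monomial m (coeff m f)
      = coeff m f • monomial (Finsupp.single i0 c + m) (1 : R) := by
    rw [X_pow_eq_monomial, monomial_mul, smul_monomial]
    simp [smul_eq_mul]
  rw [key]
  apply Subalgebra.smul_mem
  apply hmem
  · intro h0
    have h1 := congrArg (fun (w : Fin r →₀ ℕ) => w i0) h0
    simp [hc] at h1
  · -- the inequality
    set m' : Fin r →₀ ℕ := Finsupp.single i0 c + m with hm'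
    have hsame : ∀ j : Fin r, (j : ℕ) ≠ 0 → m' j = m j := by
      intro j hj
      have : j ≠ i0 := by
        intro h; apply hj; rw [h]
      simp [hm', Finsupp.single_apply, Ne.symm this]
    have hsum : (∑ j, (m' j : ℝ)) = c + ∑ j, (m j : ℝ) := by
      have : ∀ j : Fin r, (m' j : ℝ) = (Finsupp.single i0 c j : ℝ) + (m j : ℝ) := by
        intro j; rw [hm', Finsupp.add_apply]; push_cast; ring
      rw [Finset.sum_congr rfl fun j _ => this j, Finset.sum_add_distrib]
      congr 1
      have : ∀ j : Fin r, ((Finsupp.single i0 c j : ℕ) : ℝ) = if i0 = j then (c:ℝ) else 0 := by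
        intro j; rw [Finsupp.single_apply]; split <;> simp
      rw [Finset.sum_congr rfl fun j _ => this j, Finset.sum_ite_eq]
      simp
    have hT : (∑ j, (m j : ℝ)) ≤ (f.totalDegree : ℝ) := by
      have : (m.sum fun _ e => e) ≤ f.totalDegree := le_totalDegree hm
      have hsum2 : (∑ j, (m j : ℝ)) = ((m.sum fun _ e => e : ℕ) : ℝ) := by
        rw [Finsupp.sum_fintype _ _ (fun _ => rfl)]
        push_cast; rfl
      rw [hsum2]; exact_mod_cast this
    calc (∑ j ∈ Finset.univ.filter (fun j : Fin r => (j : ℕ) ≠ 0), (m' j : ℝ))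
        = ∑ j ∈ Finset.univ.filter (fun j : Fin r => (j : ℕ) ≠ 0), (m j : ℝ) := by
          apply Finset.sum_congr rfl
          intro j hj
          rw [hsame j (Finset.mem_filter.1 hj).2]
      _ ≤ ∑ j, (m j : ℝ) := by
          apply Finset.sum_le_sum_of_subset_of_nonneg (Finset.filter_subset _ _)
          intro j _ _; positivity
      _ ≤ (f.totalDegree : ℝ) := hT
      _ ≤ ε * c := hDc
      _ ≤ ε * ∑ j, (m' j : ℝ) := by
          rw [hsum]
          apply mul_le_mul_of_nonneg_left _ hε.le
          have : (0:ℝ) ≤ ∑ j, (m j : ℝ) := by positivity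
          linarith

theorem exists_elemEquiv_row_with_height_condition_tilted
    {R : Type*} [CommRing R] [IsNoetherianRing R] [IsLocalRing R]
    {r : ℕ} (A : Subalgebra R (MvPolynomial (Fin r) R)) (hA : IsTilted A)
    (n : ℕ) (hn : 2 ≤ n) (g : Fin n → A) (hg : IsUnimodular g)
    (g₀ : Fin n → R)
    (hg₀ : ∀ i, MvPolynomial.aeval
        (fun j : Fin r => if (j : ℕ) = 0 then 0 else MvPolynomial.X j)
        ((g i : MvPolynomial (Fin r) R)) = MvPolynomial.C (g₀ i))
    (hg₀um : IsUnimodular g₀) :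
    ∃ h : Fin n → A, IsUnimodular h ∧ ElemEquiv g h ∧
      ∀ i : ℕ, 1 ≤ i → i ≤ n →
        Ideal.span ((fun j => (h j : MvPolynomial (Fin r) R)) '' { j : Fin n | (j : ℕ) < i }) = ⊤ ∨
          (i : ℕ∞) ≤ idealHeight
            (Ideal.span ((fun j => (h j : MvPolynomial (Fin r) R)) ''
              { j : Fin n | (j : ℕ) < i })) := by

  obtain ⟨k, hk⟩ := exists_isUnit_of_span_top hg₀um
  rcases Nat.eq_zero_or_pos r with hr0 | hr
  · -- the case r = 0 : A is everything, make first entry 1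
    subst hr0
    have hId : ∀ f : MvPolynomial (Fin 0) R, MvPolynomial.aeval
        (fun j : Fin 0 => if (j : ℕ) = 0 then 0 else MvPolynomial.X j) f = f := by
      intro f
      obtain ⟨a, rfl⟩ := MvPolynomial.C_surjective (Fin 0) f
      simp
    have hgC : ∀ i, (g i : MvPolynomial (Fin 0) R) = C (g₀ i) := by
      intro i
      have := hg₀ i
      rwa [hId] at this
    have hmem : ∀ x : MvPolynomial (Fin 0) R, x ∈ A := by
      intro x
      obtain ⟨a, rfl⟩ := MvPolynomial.C_surjective (Fin 0) x
      rw [← MvPolynomial.algebraMap_eq]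
      exact A.algebraMap_mem a
    set binv : A := ⟨C ((hk.unit⁻¹ : Rˣ) : R), hmem _⟩ with hbinvdef
    have hbinv : g k * binv = 1 := by
      apply Subtype.coe_injective
      push_cast
      rw [hgC k, ← map_mul, hk.mul_val_inv, map_one]
    have hzero : (0 : ℕ) < n := by omega
    have hone : (1 : ℕ) < n := by omega
    set zero : Fin n := ⟨0, hzero⟩ with hzdef
    set one : Fin n := ⟨1, hone⟩ with hodef
    have hne : zero ≠ one := by
      intro h
      have := congrArg (fun x : Fin n => (x : ℕ)) h
      simp [hzdef, hodef] at this
    -- produce a row with entry 1 at position zero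
    have final : ∃ v : Fin n → A, ElemEquiv g v ∧ IsUnimodular v ∧ v zero = 1 := by
      by_cases hkz : k = zero
      · set c1 : A := (1 - g one) * binv with hc1
        set v₁ : Fin n → A := Function.update g one (g one + g zero * c1) with hv₁def
        have hv₁one : v₁ one = 1 := by
          rw [hv₁def, Function.update_self, hc1, ← hkz]
          have : g k * ((1 - g one) * binv) = (1 - g one) * (g k * binv) := by ring
          rw [this, hbinv, mul_one]
          ring
        set v₂ : Fin n → A := Function.update v₁ zero (v₁ zero + v₁ one * (1 - v₁ zero))
          with hv₂def
        refine ⟨v₂, elemEquiv_trans (elemEquiv_step g hne c1)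
          (elemEquiv_step v₁ (Ne.symm hne) (1 - v₁ zero)),
          isUnimodular_step (isUnimodular_step hg hne c1) (Ne.symm hne) _, ?_⟩
        rw [hv₂def, Function.update_self, hv₁one]
        ring
      · set c1 : A := (1 - g zero) * binv with hc1
        set v₂ : Fin n → A := Function.update g zero (g zero + g k * c1) with hv₂def
        refine ⟨v₂, elemEquiv_step g hkz c1, isUnimodular_step hg hkz c1, ?_⟩
        rw [hv₂def, Function.update_self, hc1]
        have : g k * ((1 - g zero) * binv) = (1 - g zero) * (g k * binv) := by ring
        rw [this, hbinv, mul_one]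
        ring
    obtain ⟨v, hEq, hum, hv0⟩ := final
    refine ⟨v, hum, hEq, ?_⟩
    intro i h1 _
    left
    rw [Ideal.eq_top_iff_one]
    apply Ideal.subset_span
    refine ⟨zero, by simp [hzdef]; omega, ?_⟩
    show ((v zero : A) : MvPolynomial (Fin 0) R) = 1
    rw [hv0]
    push_cast
    rfl
  · -- the main case r ≥ 1
    have hA' : ∀ f : MvPolynomial (Fin r) R, ∃ c : ℕ, 0 < c ∧ X (⟨0, hr⟩ : Fin r) ^ c * f ∈ A :=
      tilt_mem hA hr
    have hg₀' : ∀ i, piSub ((g i : MvPolynomial (Fin r) R)) = C (g₀ i) := hg₀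
    obtain ⟨v, hEq, hum, _, _, hheights⟩ := stage hr hA' g hg g₀ hg₀' k hk n le_rfl
    refine ⟨v, hum, hEq, ?_⟩
    intro i _ hi
    rcases hheights i hi with htop | hht
    · exact Or.inl htop
    · refine Or.inr ?_
      apply le_iInf
      intro p
      apply le_iInf
      intro hp
      exact hht p hp
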